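/- Let Q = ℂ[s,t,u,x₁,x₂,y₁,y₂]/(s·x₁ + t·x₂, t·x₁ + u·x₂, s·u − t²), and let d_r, d_l : Q³ → Q³ be the Q-linear maps given by matrix-vector multiplication with the matrices d_r = [[0, y₁, y₂], [x₁, −u, t], [x₂, t, −s]] and d_l = [[0, s·y₁+t·y₂, t·y₁+u·y₂], [0, −x₂·y₂, x₁·y₂], [0, x₂·y₁, −x₁·y₁]]. Then the kernel of d_l equals the range of d_r plus the Q-span of the vector (1,0,0), and for q ∈ Q one has q·(1,0,0) ∈ range(d_r) if and only if q lies in the ideal of Q generated by x₁y₁, x₁y₂, x₂y₁, x₂y₂, t·y₁+u·y₂, s·y₁+t·y₂. Consequently ker(d_l)/range(d_r) is a cyclic Q-module isomorphic to Q/(x₁y₁, x₁y₂, x₂y₁, x₂y₂, t·y₁+u·y₂, s·y₁+t·y₂). -/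

import Mathlib

noncomputable section

open MvPolynomial

namespace Stmt10

/-- `ℂ[s,t,u,x₁,x₂,y₁,y₂]`, with variables `0 ↦ s, 1 ↦ t, 2 ↦ u, 3 ↦ x₁, 4 ↦ x₂, 5 ↦ y₁, 6 ↦ y₂`. -/
abbrev P7 : Type := MvPolynomial (Fin 7) ℂ

/-- The ideal `(s·x₁ + t·x₂, t·x₁ + u·x₂, s·u − t²)`. -/
def I : Ideal P7 :=
  Ideal.span {X 0 * X 3 + X 1 * X 4, X 1 * X 3 + X 2 * X 4, X 0 * X 2 - X 1 ^ 2}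

/-- `Q = ℂ[s,t,u,x₁,x₂,y₁,y₂]/(s·x₁ + t·x₂, t·x₁ + u·x₂, s·u − t²)`. -/
abbrev Q : Type := P7 ⧸ I

def s : Q := Ideal.Quotient.mk I (X 0)
def t : Q := Ideal.Quotient.mk I (X 1)
def u : Q := Ideal.Quotient.mk I (X 2)
def x₁ : Q := Ideal.Quotient.mk I (X 3)
def x₂ : Q := Ideal.Quotient.mk I (X 4)
def y₁ : Q := Ideal.Quotient.mk I (X 5)
def y₂ : Q := Ideal.Quotient.mk I (X 6)

/-- `d_r = [[0, y₁, y₂], [x₁, −u, t], [x₂, t, −s]]` acting by matrix-vector multiplication. -/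
def dr : (Fin 3 → Q) →ₗ[Q] (Fin 3 → Q) :=
  Matrix.mulVecLin !![0, y₁, y₂; x₁, -u, t; x₂, t, -s]

/-- `d_l = [[0, s·y₁+t·y₂, t·y₁+u·y₂], [0, −x₂·y₂, x₁·y₂], [0, x₂·y₁, −x₁·y₁]]`. -/
def dl : (Fin 3 → Q) →ₗ[Q] (Fin 3 → Q) :=
  Matrix.mulVecLin
    !![0, s * y₁ + t * y₂, t * y₁ + u * y₂; 0, -(x₂ * y₂), x₁ * y₂; 0, x₂ * y₁, -(x₁ * y₁)]

/-- The vector `(1,0,0) ∈ Q³`. -/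
def e₀ : Fin 3 → Q := ![1, 0, 0]

/-- The ideal `(x₁y₁, x₁y₂, x₂y₁, x₂y₂, t·y₁+u·y₂, s·y₁+t·y₂)` of `Q`. -/
def J : Ideal Q :=
  Ideal.span {x₁ * y₁, x₁ * y₂, x₂ * y₁, x₂ * y₂, t * y₁ + u * y₂, s * y₁ + t * y₂}

/-! ### Auxiliary lemmas -/

lemma g3_ne : (X 0 * X 2 - X 1 ^ 2 : P7) ≠ 0 := by
  intro h
  have := congrArg (eval (fun i : Fin 7 => if i = 0 ∨ i = 2 then (1 : ℂ) else 0)) h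
  rw [map_sub, map_mul, map_pow, eval_X, eval_X, eval_X, map_zero,
    if_pos (by decide : (0 : Fin 7) = 0 ∨ (0 : Fin 7) = 2),
    if_pos (by decide : (2 : Fin 7) = 0 ∨ (2 : Fin 7) = 2),
    if_neg (by decide : ¬((1 : Fin 7) = 0 ∨ (1 : Fin 7) = 2))] at this
  norm_num at this

lemma I_rep {w : P7} (h : w ∈ I) : ∃ p q r : P7,
    w = p * (X 0 * X 3 + X 1 * X 4) + q * (X 1 * X 3 + X 2 * X 4)
        + r * (X 0 * X 2 - X 1 ^ 2) := by
  rw [I, Ideal.mem_span_insert] at h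
  obtain ⟨p, z, hz, hw⟩ := h
  obtain ⟨q, r, hz⟩ := Ideal.mem_span_pair.mp hz
  exact ⟨p, q, r, by rw [hw, ← hz]; ring⟩

/-- the substitution killing a set of variables -/
def kill (c : Fin 7 → Prop) [DecidablePred c] : P7 →ₐ[ℂ] P7 :=
  aeval fun i => if c i then 0 else X i

lemma kill_X (c : Fin 7 → Prop) [DecidablePred c] (i : Fin 7) :
    kill c (X i) = if c i then 0 else X i := by simp [kill]

lemma sub_kill_mem (c : Fin 7 → Prop) [DecidablePred c] (p : P7) :
    p - kill c p ∈ Ideal.span (Set.image (X : Fin 7 → P7) {i | c i}) := by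
  induction p using MvPolynomial.induction_on with
  | C a => simp [kill]
  | add p q hp hq =>
      have : p + q - kill c (p + q) = (p - kill c p) + (q - kill c q) := by
        simp [map_add]; ring
      rw [this]; exact add_mem hp hq
  | mul_X p i hp =>
      by_cases hi : c i
      · have : p * X i - kill c (p * X i) = p * X i := by
          simp [kill, map_mul, hi]
        rw [this]; exact Ideal.mul_mem_left _ _ (Ideal.subset_span ⟨i, hi, rfl⟩)
      · have : p * X i - kill c (p * X i) = (p - kill c p) * X i := by
          simp [kill, map_mul, hi]; ring
        rw [this]; exact Ideal.mul_mem_right _ _ hp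

def πx : P7 →ₐ[ℂ] P7 := kill (fun i => i = 3 ∨ i = 4)

def π4 : P7 →ₐ[ℂ] P7 := kill (fun i => i = 4)

lemma πx_X0 : πx (X 0) = X 0 := by rw [πx, kill_X, if_neg (by decide)]
lemma πx_X1 : πx (X 1) = X 1 := by rw [πx, kill_X, if_neg (by decide)]
lemma πx_X2 : πx (X 2) = X 2 := by rw [πx, kill_X, if_neg (by decide)]
lemma πx_X3 : πx (X 3) = 0 := by rw [πx, kill_X, if_pos (by decide)]
lemma πx_X4 : πx (X 4) = 0 := by rw [πx, kill_X, if_pos (by decide)]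
lemma πx_X5 : πx (X 5) = X 5 := by rw [πx, kill_X, if_neg (by decide)]
lemma πx_X6 : πx (X 6) = X 6 := by rw [πx, kill_X, if_neg (by decide)]

lemma π4_X0 : π4 (X 0) = X 0 := by rw [π4, kill_X, if_neg (by decide)]
lemma π4_X1 : π4 (X 1) = X 1 := by rw [π4, kill_X, if_neg (by decide)]
lemma π4_X2 : π4 (X 2) = X 2 := by rw [π4, kill_X, if_neg (by decide)]
lemma π4_X3 : π4 (X 3) = X 3 := by rw [π4, kill_X, if_neg (by decide)]
lemma π4_X4 : π4 (X 4) = 0 := by rw [π4, kill_X, if_pos rfl]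

lemma sub_πx_mem (p : P7) : p - πx p ∈ Ideal.span {(X 3 : P7), X 4} := by
  have h := sub_kill_mem (fun i => i = 3 ∨ i = 4) p
  rw [show {i : Fin 7 | i = 3 ∨ i = 4} = ({3, 4} : Set (Fin 7)) from rfl,
    Set.image_pair] at h
  exact h

lemma sub_π4_mem (p : P7) : p - π4 p ∈ Ideal.span {(X 4 : P7)} := by
  have h := sub_kill_mem (fun i => i = 4) p
  rw [show {i : Fin 7 | i = 4} = ({4} : Set (Fin 7)) from rfl,
    Set.image_singleton] at h
  exact h

/-! ### `X 5` is a nonzerodivisor modulo `I` -/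

def e7 : Fin 7 ≃ Option (Fin 6) where
  toFun := ![some 0, some 1, some 2, some 3, some 4, none, some 5]
  invFun := fun o => o.elim 5 ![0, 1, 2, 3, 4, 6]
  left_inv := by decide
  right_inv := by decide

def ε : P7 ≃ₐ[ℂ] Polynomial (MvPolynomial (Fin 6) ℂ) :=
  (renameEquiv ℂ e7).trans (optionEquivLeft ℂ (Fin 6))

def I₆ : Ideal (MvPolynomial (Fin 6) ℂ) :=
  Ideal.span {X 0 * X 3 + X 1 * X 4, X 1 * X 3 + X 2 * X 4, X 0 * X 2 - X 1 ^ 2}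

def εr : P7 ≃+* Polynomial (MvPolynomial (Fin 6) ℂ) := ε.toRingEquiv

lemma mapI : Ideal.map εr I = Ideal.map (Polynomial.C) I₆ := by
  rw [I, I₆, Ideal.map_span, Ideal.map_span]
  congr 1
  simp only [Set.image_insert_eq, Set.image_singleton, map_add, map_mul, map_sub, map_pow]
  norm_num [εr, ε, show e7 2 = some 2 from rfl, show e7 3 = some 3 from rfl,
    show e7 4 = some 4 from rfl, show e7 0 = some 0 from rfl, show e7 1 = some 1 from rfl,
    optionEquivLeft_X_some]

lemma memTrans {w : P7} : w ∈ I ↔ ε w ∈ Ideal.map (Polynomial.C) I₆ := by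
  rw [← mapI]
  have h := Ideal.apply_mem_of_equiv_iff (f := εr) (x := w) (I := I)
  simp only [εr, AlgEquiv.coe_ringEquiv] at h
  exact h.symm

lemma X5_nzd {p : P7} (h : X 5 * p ∈ I) : p ∈ I := by
  rw [memTrans] at h ⊢
  have h5 : ε (X 5) = Polynomial.X := by
    simp only [ε, AlgEquiv.trans_apply, renameEquiv_apply, rename_X]
    rw [show e7 5 = none from rfl, optionEquivLeft_X_none]
  rw [map_mul, h5, Ideal.mem_map_C_iff] at h
  rw [Ideal.mem_map_C_iff]
  intro n
  have := h (n + 1)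
  rwa [Polynomial.coeff_X_mul] at this

/-! ### The syzygy lemma over `P7` -/

lemma syz {V₁ V₂ : P7} (h : X 4 * V₁ - X 3 * V₂ ∈ I) :
    ∃ g p q i₁ i₂ : P7, i₁ ∈ I ∧ i₂ ∈ I ∧
      V₁ = g * X 3 + p * X 1 + q * X 2 + i₁ ∧
      V₂ = g * X 4 - p * X 0 - q * X 1 + i₂ := by
  obtain ⟨p, q, r, heq⟩ := I_rep h
  -- kill x₁, x₂
  have key : πx r * (X 0 * X 2 - X 1 ^ 2) = 0 := by
    have h2 := congrArg πx heq
    simp only [map_mul, map_add, map_sub, map_pow, πx_X0, πx_X1, πx_X2, πx_X3, πx_X4] at h2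
    linear_combination -h2
  have hr0 : πx r = 0 := by
    rcases mul_eq_zero.mp key with h' | h'
    · exact h'
    · exact absurd h' g3_ne
  have hrsp : r ∈ Ideal.span {(X 3 : P7), X 4} := by
    have h' := sub_πx_mem r
    rwa [hr0, sub_zero] at h'
  obtain ⟨r₁, r₂, hr⟩ := Ideal.mem_span_pair.mp hrsp
  have rel : X 4 * (V₁ - p * X 1 - q * X 2 - r₂ * (X 0 * X 2 - X 1 ^ 2))
      = X 3 * (V₂ + p * X 0 + q * X 1 + r₁ * (X 0 * X 2 - X 1 ^ 2)) := by
    linear_combination heq - (X 0 * X 2 - X 1 ^ 2) * hr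
  have hπW : π4 (V₂ + p * X 0 + q * X 1 + r₁ * (X 0 * X 2 - X 1 ^ 2))
      = π4 V₂ + π4 p * X 0 + π4 q * X 1 + π4 r₁ * (X 0 * X 2 - X 1 ^ 2) := by
    simp only [map_mul, map_add, map_sub, map_pow, π4_X0, π4_X1, π4_X2]
  have h4 : X 3 * π4 (V₂ + p * X 0 + q * X 1 + r₁ * (X 0 * X 2 - X 1 ^ 2)) = 0 := by
    have h2 := congrArg π4 rel
    simp only [map_mul, map_add, map_sub, map_pow, π4_X0, π4_X1, π4_X2, π4_X3, π4_X4] at h2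
    rw [hπW]
    linear_combination -h2
  have h4' : π4 (V₂ + p * X 0 + q * X 1 + r₁ * (X 0 * X 2 - X 1 ^ 2)) = 0 := by
    rcases mul_eq_zero.mp h4 with h' | h'
    · exact absurd h' (X_ne_zero 3)
    · exact h'
  have hsp : V₂ + p * X 0 + q * X 1 + r₁ * (X 0 * X 2 - X 1 ^ 2) ∈ Ideal.span {(X 4 : P7)} := by
    have h' := sub_π4_mem (V₂ + p * X 0 + q * X 1 + r₁ * (X 0 * X 2 - X 1 ^ 2))
    rwa [h4', sub_zero] at h'
  obtain ⟨g, hg⟩ := Ideal.mem_span_singleton.mp hsp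
  have hc : X 4 * (V₁ - p * X 1 - q * X 2 - r₂ * (X 0 * X 2 - X 1 ^ 2)) = X 4 * (g * X 3) := by
    rw [rel, hg]; ring
  have hV₁ := mul_left_cancel₀ (X_ne_zero (4 : Fin 7)) hc
  refine ⟨g, p, q, r₂ * (X 0 * X 2 - X 1 ^ 2), -(r₁ * (X 0 * X 2 - X 1 ^ 2)), ?_, ?_, ?_, ?_⟩
  · exact Ideal.mul_mem_left _ _ (Ideal.subset_span (by simp [I]))
  · exact neg_mem (Ideal.mul_mem_left _ _ (Ideal.subset_span (by simp [I])))
  · linear_combination hV₁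
  · linear_combination hg

/-! ### Lifted version of `J` -/

def JL : Ideal P7 :=
  Ideal.span {X 3 * X 5, X 3 * X 6, X 4 * X 5, X 4 * X 6,
    X 1 * X 5 + X 2 * X 6, X 0 * X 5 + X 1 * X 6}

lemma stmt2f {C₀ C₁ C₂ : P7}
    (h2 : X 3 * C₀ - X 2 * C₁ + X 1 * C₂ ∈ I)
    (h3 : X 4 * C₀ + X 1 * C₁ - X 0 * C₂ ∈ I) :
    X 5 * C₁ + X 6 * C₂ ∈ JL := by
  obtain ⟨p₂, q₂, r₂, e2⟩ := I_rep h2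
  obtain ⟨p₃, q₃, r₃, e3⟩ := I_rep h3
  have f2 := congrArg πx e2
  have f3 := congrArg πx e3
  simp only [map_mul, map_add, map_sub, map_pow, πx_X0, πx_X1, πx_X2, πx_X3, πx_X4] at f2 f3
  -- f2 : -(X 2 * πx C₁) + X 1 * πx C₂-ish = πx r₂ * g₃ ;  f3 : X 1 * πx C₁ - X 0 * πx C₂ = πx r₃ * g₃
  have hC1 : (X 0 * X 2 - X 1 ^ 2) * πx C₁
      = (X 0 * X 2 - X 1 ^ 2) * (-(X 0 * πx r₂ + X 1 * πx r₃)) := by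
    linear_combination (-(X 0)) * f2 - X 1 * f3
  have hC2 : (X 0 * X 2 - X 1 ^ 2) * πx C₂
      = (X 0 * X 2 - X 1 ^ 2) * (-(X 1 * πx r₂ + X 2 * πx r₃)) := by
    linear_combination (-(X 1)) * f2 - X 2 * f3
  have pv1 : πx C₁ = -(X 0 * πx r₂ + X 1 * πx r₃) := mul_left_cancel₀ g3_ne hC1
  have pv2 : πx C₂ = -(X 1 * πx r₂ + X 2 * πx r₃) := mul_left_cancel₀ g3_ne hC2
  obtain ⟨a, b, hab⟩ := Ideal.mem_span_pair.mp (sub_πx_mem C₁)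
  obtain ⟨c, d, hcd⟩ := Ideal.mem_span_pair.mp (sub_πx_mem C₂)
  have key : X 5 * C₁ + X 6 * C₂
      = a * (X 3 * X 5) + b * (X 4 * X 5) + c * (X 3 * X 6) + d * (X 4 * X 6)
        + (-(πx r₃)) * (X 1 * X 5 + X 2 * X 6) + (-(πx r₂)) * (X 0 * X 5 + X 1 * X 6) := by
    linear_combination -X 5 * hab - X 6 * hcd + X 5 * pv1 + X 6 * pv2
  rw [key]
  refine add_mem (add_mem (add_mem (add_mem (add_mem ?_ ?_) ?_) ?_) ?_) ?_ <;>
    exact Ideal.mul_mem_left _ _ (Ideal.subset_span (by simp [JL]))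

lemma mk_JL {w : P7} (hw : w ∈ JL) : Ideal.Quotient.mk I w ∈ J := by
  have h1 : Ideal.map (Ideal.Quotient.mk I) JL ≤ J := by
    rw [JL, Ideal.map_span]
    refine Ideal.span_le.mpr ?_
    rintro _ ⟨g, hg, rfl⟩
    simp only [Set.mem_insert_iff, Set.mem_singleton_iff] at hg
    rcases hg with rfl | rfl | rfl | rfl | rfl | rfl <;>
      · refine Ideal.subset_span ?_
        simp only [map_add, map_mul, J, x₁, x₂, y₁, y₂, s, t, u, Set.mem_insert_iff,
          Set.mem_singleton_iff]
        tauto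
  exact h1 (Ideal.mem_map_of_mem _ hw)

/-! ### Computations in `Q` -/

lemma dr_apply (v : Fin 3 → Q) : dr v =
    ![y₁ * v 1 + y₂ * v 2, x₁ * v 0 - u * v 1 + t * v 2, x₂ * v 0 + t * v 1 - s * v 2] := by
  funext i
  fin_cases i <;>
    · simp [dr, Matrix.mulVecLin_apply, Matrix.mulVec, dotProduct, Fin.sum_univ_three]
      try ring

lemma dl_apply (v : Fin 3 → Q) : dl v =
    ![(s * y₁ + t * y₂) * v 1 + (t * y₁ + u * y₂) * v 2,
      -(x₂ * y₂) * v 1 + x₁ * y₂ * v 2, x₂ * y₁ * v 1 - x₁ * y₁ * v 2] := by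
  funext i
  fin_cases i <;>
    · simp [dl, Matrix.mulVecLin_apply, Matrix.mulVec, dotProduct, Fin.sum_univ_three]
      try ring

lemma dl_e₀ : dl e₀ = 0 := by
  rw [show e₀ = ![(1 : Q), 0, 0] from rfl]
  funext i
  fin_cases i <;>
    simp [dl, Matrix.mulVecLin_apply, Matrix.mulVec, dotProduct, Fin.sum_univ_three]

lemma rel1 : s * x₁ + t * x₂ = 0 := by
  rw [s, x₁, t, x₂, ← map_mul, ← map_mul, ← map_add]
  exact Ideal.Quotient.eq_zero_iff_mem.mpr (Ideal.subset_span (by simp [I]))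

lemma rel2 : t * x₁ + u * x₂ = 0 := by
  rw [t, x₁, u, x₂, ← map_mul, ← map_mul, ← map_add]
  exact Ideal.Quotient.eq_zero_iff_mem.mpr (Ideal.subset_span (by simp [I]))

lemma rel3 : s * u - t ^ 2 = 0 := by
  rw [s, u, t, ← map_mul, ← map_pow, ← map_sub]
  exact Ideal.Quotient.eq_zero_iff_mem.mpr (Ideal.subset_span (by simp [I]))

lemma smul_e₀ (g : Q) : g • e₀ = ![g, 0, 0] := by
  funext i
  fin_cases i <;> simp [e₀]

lemma w1 : dr ![u, x₁, 0] = (x₁ * y₁) • e₀ := by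
  rw [dr_apply, smul_e₀]
  funext i
  fin_cases i
  · show y₁ * x₁ + y₂ * 0 = x₁ * y₁; ring
  · show x₁ * u - u * x₁ + t * 0 = 0; ring
  · show x₂ * u + t * x₁ - s * 0 = 0; linear_combination rel2

lemma w2 : dr ![-t, 0, x₁] = (x₁ * y₂) • e₀ := by
  rw [dr_apply, smul_e₀]
  funext i
  fin_cases i
  · show y₁ * 0 + y₂ * x₁ = x₁ * y₂; ring
  · show x₁ * -t - u * 0 + t * x₁ = 0; ring
  · show x₂ * -t + t * 0 - s * x₁ = 0; linear_combination -rel1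

lemma w3 : dr ![-t, x₂, 0] = (x₂ * y₁) • e₀ := by
  rw [dr_apply, smul_e₀]
  funext i
  fin_cases i
  · show y₁ * x₂ + y₂ * 0 = x₂ * y₁; ring
  · show x₁ * -t - u * x₂ + t * 0 = 0; linear_combination -rel2
  · show x₂ * -t + t * x₂ - s * 0 = 0; ring

lemma w4 : dr ![s, 0, x₂] = (x₂ * y₂) • e₀ := by
  rw [dr_apply, smul_e₀]
  funext i
  fin_cases i
  · show y₁ * 0 + y₂ * x₂ = x₂ * y₂; ring
  · show x₁ * s - u * 0 + t * x₂ = 0; linear_combination rel1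
  · show x₂ * s + t * 0 - s * x₂ = 0; ring

lemma w5 : dr ![0, t, u] = (t * y₁ + u * y₂) • e₀ := by
  rw [dr_apply, smul_e₀]
  funext i
  fin_cases i
  · show y₁ * t + y₂ * u = t * y₁ + u * y₂; ring
  · show x₁ * 0 - u * t + t * u = 0; ring
  · show x₂ * 0 + t * t - s * u = 0; linear_combination -rel3

lemma w6 : dr ![0, s, t] = (s * y₁ + t * y₂) • e₀ := by
  rw [dr_apply, smul_e₀]
  funext i
  fin_cases i
  · show y₁ * s + y₂ * t = s * y₁ + t * y₂; ring
  · show x₁ * 0 - u * s + t * t = 0; linear_combination -rel3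
  · show x₂ * 0 + t * s - s * t = 0; ring

/-- Part 2 of the statement. -/
lemma stmt2 (q : Q) : q • e₀ ∈ LinearMap.range dr ↔ q ∈ J := by
  constructor
  · rintro ⟨c, hc⟩
    obtain ⟨C₀, hC₀⟩ := Ideal.Quotient.mk_surjective (c 0)
    obtain ⟨C₁, hC₁⟩ := Ideal.Quotient.mk_surjective (c 1)
    obtain ⟨C₂, hC₂⟩ := Ideal.Quotient.mk_surjective (c 2)
    rw [dr_apply, smul_e₀] at hc
    have h1 : y₁ * c 1 + y₂ * c 2 = q := congrFun hc 0
    have h2 : x₁ * c 0 - u * c 1 + t * c 2 = 0 := congrFun hc 1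
    have h3 : x₂ * c 0 + t * c 1 - s * c 2 = 0 := congrFun hc 2
    have m2 : X 3 * C₀ - X 2 * C₁ + X 1 * C₂ ∈ I := by
      rw [← Ideal.Quotient.eq_zero_iff_mem, map_add, map_sub, map_mul, map_mul, map_mul,
        hC₀, hC₁, hC₂]
      exact h2
    have m3 : X 4 * C₀ + X 1 * C₁ - X 0 * C₂ ∈ I := by
      rw [← Ideal.Quotient.eq_zero_iff_mem, map_sub, map_add, map_mul, map_mul, map_mul,
        hC₀, hC₁, hC₂]
      exact h3
    have hq : q = Ideal.Quotient.mk I (X 5 * C₁ + X 6 * C₂) := by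
      rw [map_add, map_mul, map_mul, hC₁, hC₂]
      exact h1.symm
    rw [hq]
    exact mk_JL (stmt2f m2 m3)
  · intro hq
    have hJK : J ≤ (LinearMap.range dr).comap (LinearMap.toSpanSingleton Q (Fin 3 → Q) e₀) := by
      rw [J]
      refine Ideal.span_le.mpr ?_
      rintro g hg
      simp only [Set.mem_insert_iff, Set.mem_singleton_iff] at hg
      refine Submodule.mem_comap.mpr ?_
      rw [LinearMap.toSpanSingleton_apply]
      rcases hg with rfl | rfl | rfl | rfl | rfl | rfl
      · exact ⟨_, w1⟩
      · exact ⟨_, w2⟩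
      · exact ⟨_, w3⟩
      · exact ⟨_, w4⟩
      · exact ⟨_, w5⟩
      · exact ⟨_, w6⟩
    have h' := hJK hq
    rw [Submodule.mem_comap, LinearMap.toSpanSingleton_apply] at h'
    exact h'

lemma drdl (c : Fin 3 → Q) : dl (dr c) = 0 := by
  rw [dr_apply, dl_apply]
  funext i
  fin_cases i
  · show (s * y₁ + t * y₂) * (x₁ * c 0 - u * c 1 + t * c 2)
        + (t * y₁ + u * y₂) * (x₂ * c 0 + t * c 1 - s * c 2) = 0
    linear_combination (y₁ * c 0) * rel1 + (y₂ * c 0) * rel2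
      + (-(y₁ * c 1) - y₂ * c 2) * rel3
  · show -(x₂ * y₂) * (x₁ * c 0 - u * c 1 + t * c 2)
        + x₁ * y₂ * (x₂ * c 0 + t * c 1 - s * c 2) = 0
    linear_combination (y₂ * c 1) * rel2 - (y₂ * c 2) * rel1
  · show x₂ * y₁ * (x₁ * c 0 - u * c 1 + t * c 2)
        - x₁ * y₁ * (x₂ * c 0 + t * c 1 - s * c 2) = 0
    linear_combination -(y₁ * c 1) * rel2 + (y₁ * c 2) * rel1

set_option maxHeartbeats 1600000 in
/-- Part 1 of the statement. -/
lemma stmt1 : LinearMap.ker dl = LinearMap.range dr ⊔ Submodule.span Q {e₀} := by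
  apply le_antisymm
  · intro v hv
    rw [LinearMap.mem_ker, dl_apply] at hv
    have h2 : x₂ * y₁ * v 1 - x₁ * y₁ * v 2 = 0 := by
      have h' := congrFun hv 2
      simpa using h'
    obtain ⟨V₁, hV₁⟩ := Ideal.Quotient.mk_surjective (v 1)
    obtain ⟨V₂, hV₂⟩ := Ideal.Quotient.mk_surjective (v 2)
    have hmem : X 5 * (X 4 * V₁ - X 3 * V₂) ∈ I := by
      rw [← Ideal.Quotient.eq_zero_iff_mem]
      have hcalc : Ideal.Quotient.mk I (X 5 * (X 4 * V₁ - X 3 * V₂))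
          = x₂ * y₁ * v 1 - x₁ * y₁ * v 2 := by
        rw [map_mul, map_sub, map_mul, map_mul, hV₁, hV₂]
        simp only [x₁, x₂, y₁]
        ring
      rw [hcalc]
      exact h2
    obtain ⟨g, p, qq, i₁, i₂, hi₁, hi₂, hv1, hv2⟩ := syz (X5_nzd hmem)
    have e1 : v 1 = Ideal.Quotient.mk I g * x₁ + Ideal.Quotient.mk I p * t
        + Ideal.Quotient.mk I qq * u := by
      rw [← hV₁, hv1]
      simp only [map_add, map_mul, Ideal.Quotient.eq_zero_iff_mem.mpr hi₁, add_zero]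
      simp only [x₁, t, u]
    have e2 : v 2 = Ideal.Quotient.mk I g * x₂ - Ideal.Quotient.mk I p * s
        - Ideal.Quotient.mk I qq * t := by
      rw [← hV₂, hv2]
      simp only [map_add, map_sub, map_mul, Ideal.Quotient.eq_zero_iff_mem.mpr hi₂, add_zero]
      simp only [x₂, s, t]
    refine Submodule.mem_sup.mpr
      ⟨dr ![Ideal.Quotient.mk I g, -(Ideal.Quotient.mk I qq), Ideal.Quotient.mk I p],
        ⟨_, rfl⟩,
        (v 0 - (y₁ * (-(Ideal.Quotient.mk I qq)) + y₂ * Ideal.Quotient.mk I p)) • e₀,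
        Submodule.smul_mem _ _ (Submodule.mem_span_singleton_self e₀), ?_⟩
    rw [dr_apply, smul_e₀]
    funext i
    fin_cases i
    · show y₁ * -(Ideal.Quotient.mk I qq) + y₂ * Ideal.Quotient.mk I p
          + (v 0 - (y₁ * -(Ideal.Quotient.mk I qq) + y₂ * Ideal.Quotient.mk I p)) = v 0
      ring
    · show x₁ * Ideal.Quotient.mk I g - u * -(Ideal.Quotient.mk I qq)
          + t * Ideal.Quotient.mk I p + 0 = v 1
      linear_combination -e1
    · show x₂ * Ideal.Quotient.mk I g + t * -(Ideal.Quotient.mk I qq)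
          - s * Ideal.Quotient.mk I p + 0 = v 2
      linear_combination -e2
  · refine sup_le ?_ ?_
    · rintro w ⟨c, rfl⟩
      exact LinearMap.mem_ker.mpr (drdl c)
    · rw [Submodule.span_le, Set.singleton_subset_iff]
      exact LinearMap.mem_ker.mpr dl_e₀

set_option maxHeartbeats 4000000 in
set_option synthInstance.maxHeartbeats 1000000 in
/-- `ker d_l = range d_r + Q·(1,0,0)`; moreover `q·(1,0,0) ∈ range d_r` iff `q ∈ J`,
and consequently `ker d_l / range d_r ≅ Q/J` as `Q`-modules. -/
theorem stmt_10 :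
    LinearMap.ker dl = LinearMap.range dr ⊔ Submodule.span Q {e₀} ∧
    (∀ q : Q, q • e₀ ∈ LinearMap.range dr ↔ q ∈ J) ∧
    Nonempty ((↥(LinearMap.ker dl) ⧸
        (LinearMap.range dr).comap (LinearMap.ker dl).subtype) ≃ₗ[Q] (Q ⧸ J)) := by
  set N : Submodule Q (LinearMap.ker dl) :=
    (LinearMap.range dr).comap (LinearMap.ker dl).subtype with hN
  let Lr : Q →ₗ[Q] LinearMap.ker dl :=
    LinearMap.codRestrict (LinearMap.ker dl) (LinearMap.toSpanSingleton Q (Fin 3 → Q) e₀)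
      (fun q => LinearMap.mem_ker.mpr
        (by rw [LinearMap.toSpanSingleton_apply, map_smul, dl_e₀, smul_zero]))
  let f : Q →ₗ[Q] (LinearMap.ker dl ⧸ N) := N.mkQ.comp Lr
  have hval : ∀ a : Q, ((Lr a : LinearMap.ker dl) : Fin 3 → Q) = a • e₀ := fun a => by
    simp [Lr, LinearMap.toSpanSingleton_apply]
  have hsurj : Function.Surjective f := by
    intro x
    obtain ⟨w, rfl⟩ := Submodule.mkQ_surjective N x
    obtain ⟨y, hy, z, hz, hyz⟩ := Submodule.mem_sup.mp (stmt1.le w.2)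
    obtain ⟨a, ha⟩ := Submodule.mem_span_singleton.mp hz
    refine ⟨a, ?_⟩
    show N.mkQ (Lr a) = N.mkQ w
    rw [Submodule.mkQ_apply, Submodule.mkQ_apply, Submodule.Quotient.eq, hN,
      Submodule.mem_comap]
    have hsub : (LinearMap.ker dl).subtype (Lr a - w) = a • e₀ - (w : Fin 3 → Q) := by
      rw [Submodule.subtype_apply, AddSubgroupClass.coe_sub, hval]
    rw [hsub, ha, ← hyz]
    have : z - (y + z) = -y := by abel
    rw [this]
    exact neg_mem hy
  have hker : LinearMap.ker f = J := by
    ext q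
    rw [LinearMap.mem_ker]
    show N.mkQ (Lr q) = 0 ↔ q ∈ J
    rw [Submodule.mkQ_apply, Submodule.Quotient.mk_eq_zero, hN, Submodule.mem_comap,
      Submodule.subtype_apply, hval]
    exact stmt2 q
  exact ⟨stmt1, stmt2, ⟨((Submodule.quotEquivOfEq J (LinearMap.ker f) hker.symm).trans
    (f.quotKerEquivOfSurjective hsurj)).symm⟩⟩

end Stmt10
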